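/- In R = MvPowerSeries (Fin m) ℚ one has the identity Td · (Σ_{r=2}^m (−1)^r · r(r−1) · ch_r) = Σ_{(j,k), j ≠ k} (∏_{l ∉ {j,k}} X_l) · h(X_j) · h(X_k), where the sum on the right runs over all ordered pairs of distinct indices j, k ∈ Fin m. -/

import Mathlib

open Finset

noncomputable section

/-- The element of `MvPowerSeries (Fin m) ℚ` obtained by substituting the variable `X j`
into a one-variable formal power series `f`. -/
def substAt {m : ℕ} (j : Fin m) (f : PowerSeries ℚ) : MvPowerSeries (Fin m) ℚ :=
  fun n => if n.support ⊆ {j} then PowerSeries.coeff (n j) f else 0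

/-- The one-variable power series `exp (−X) = Σ_{n ≥ 0} (−X)^n / n!`. -/
def expNeg : PowerSeries ℚ := PowerSeries.mk fun n => (-1) ^ n / n.factorial

/-- `ch m r = Σ_{S ⊆ Fin m, |S| = r} ∏_{j ∈ S} exp (−X j)`, the `r`-th Chern character
term of the exterior powers, written in Chern roots. -/
def ch (m : ℕ) (r : ℕ) : MvPowerSeries (Fin m) ℚ :=
  ∑ S ∈ Finset.powersetCard r (Finset.univ : Finset (Fin m)),
    ∏ j ∈ S, substAt j expNeg

/-- `esymm m k = Σ_{S ⊆ Fin m, |S| = k} ∏_{j ∈ S} X j`, the `k`-th elementary symmetric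
polynomial of the variables, as a multivariate power series. -/
def esymm (m : ℕ) (k : ℕ) : MvPowerSeries (Fin m) ℚ :=
  ∑ S ∈ Finset.powersetCard k (Finset.univ : Finset (Fin m)),
    ∏ j ∈ S, MvPowerSeries.X j

/-- The Todd class `Td = ∏_{j=1}^m φ(X_j)` written in Chern roots, where `φ` is the
Todd series `X/(1 − e^{−X})`. -/
def Td (m : ℕ) (φ : PowerSeries ℚ) : MvPowerSeries (Fin m) ℚ :=
  ∏ j : Fin m, substAt j φ

/-- `Td′ = Σ_{j=1}^m φ′(X_j) · ∏_{k ≠ j} φ(X_k)`, the class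
`Td′(A) = ∂/∂t Td(A + t·Id)|_{t=0}` written in Chern roots. -/
def Td' (m : ℕ) (φ : PowerSeries ℚ) : MvPowerSeries (Fin m) ℚ :=
  ∑ j : Fin m, substAt j (PowerSeries.derivative (R := ℚ) φ) *
    ∏ k ∈ Finset.univ.erase j, substAt k φ

/-- Two multivariate power series agree in total degree `≤ p`: their coefficients at every
multi-exponent of total degree `≤ p` coincide. -/
def AgreeUpTo (m p : ℕ) (F G : MvPowerSeries (Fin m) ℚ) : Prop :=
  ∀ n : Fin m →₀ ℕ, (∑ j, n j) ≤ p → MvPowerSeries.coeff n F = MvPowerSeries.coeff n G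

/-- Two multivariate power series agree in total degree `p`: their coefficients at every
multi-exponent of total degree `p` coincide. -/
def AgreeAt (m p : ℕ) (F G : MvPowerSeries (Fin m) ℚ) : Prop :=
  ∀ n : Fin m →₀ ℕ, (∑ j, n j) = p → MvPowerSeries.coeff n F = MvPowerSeries.coeff n G

lemma coeff_substAt {m : ℕ} (j : Fin m) (f : PowerSeries ℚ) (n : Fin m →₀ ℕ) :
    MvPowerSeries.coeff n (substAt j f)
      = if n.support ⊆ {j} then PowerSeries.coeff (n j) f else 0 := rfl

lemma substAt_one {m : ℕ} (j : Fin m) : substAt j 1 = 1 := by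
  ext n
  rw [coeff_substAt, MvPowerSeries.coeff_one]
  by_cases hn : n = 0
  · subst hn; simp
  · rw [if_neg hn]
    split_ifs with hs
    · rw [PowerSeries.coeff_one, if_neg]
      intro h0
      apply hn
      rw [Finsupp.support_subset_singleton.mp hs, h0, Finsupp.single_zero]
    · rfl

lemma substAt_X {m : ℕ} (j : Fin m) : substAt j PowerSeries.X = MvPowerSeries.X j := by
  ext n
  rw [coeff_substAt, MvPowerSeries.coeff_X]
  split_ifs with hs he he
  · rw [PowerSeries.coeff_X, if_pos]; rw [he]; simp
  · rw [PowerSeries.coeff_X, if_neg]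
    intro h1
    apply he
    rw [Finsupp.support_subset_singleton.mp hs, h1]
  · exact absurd (by rw [he]; exact Finsupp.support_single_subset) hs
  · rfl

lemma substAt_sub {m : ℕ} (j : Fin m) (f g : PowerSeries ℚ) :
    substAt j (f - g) = substAt j f - substAt j g := by
  ext n
  rw [map_sub, coeff_substAt, coeff_substAt, coeff_substAt]
  split_ifs <;> simp

lemma substAt_mul {m : ℕ} (j : Fin m) (f g : PowerSeries ℚ) :
    substAt j (f * g) = substAt j f * substAt j g := by
  ext n
  rw [MvPowerSeries.coeff_mul, coeff_substAt]
  by_cases hn : n.support ⊆ {j}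
  · rw [if_pos hn, PowerSeries.coeff_mul]
    refine Finset.sum_nbij' (i := fun p => (Finsupp.single j p.1, Finsupp.single j p.2))
      (j := fun p => (p.1 j, p.2 j)) ?_ ?_ ?_ ?_ ?_
    · intro p hp
      rw [Finset.HasAntidiagonal.mem_antidiagonal] at hp ⊢
      rw [← Finsupp.single_add, hp]
      exact (Finsupp.support_subset_singleton.mp hn).symm
    · intro p hp
      rw [Finset.HasAntidiagonal.mem_antidiagonal] at hp ⊢
      rw [← Finsupp.add_apply, hp]
    · intro p _; simp
    · intro p hp
      rw [Finset.HasAntidiagonal.mem_antidiagonal] at hp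
      have hp1 : p.1.support ⊆ {j} := by
        intro x hx
        rw [Finsupp.mem_support_iff] at hx
        by_contra hxj
        have : n x = 0 := by
          have := Finsupp.support_subset_singleton.mp hn
          rw [this]; exact Finsupp.single_eq_of_ne (fun e => hxj (by rw [e]; exact Finset.mem_singleton_self _))
        rw [← hp] at this
        simp only [Finsupp.add_apply] at this
        exact hx (Nat.eq_zero_of_add_eq_zero_right this)
      have hp2 : p.2.support ⊆ {j} := by
        intro x hx
        rw [Finsupp.mem_support_iff] at hx
        by_contra hxj
        have : n x = 0 := by
          have := Finsupp.support_subset_singleton.mp hn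
          rw [this]; exact Finsupp.single_eq_of_ne (fun e => hxj (by rw [e]; exact Finset.mem_singleton_self _))
        rw [← hp] at this
        simp only [Finsupp.add_apply] at this
        exact hx (Nat.eq_zero_of_add_eq_zero_left this)
      ext <;> simp [(Finsupp.support_subset_singleton.mp hp1).symm,
        (Finsupp.support_subset_singleton.mp hp2).symm]
    · intro p _
      rw [coeff_substAt, coeff_substAt,
        if_pos Finsupp.support_single_subset, if_pos Finsupp.support_single_subset]
      simp
  · rw [if_neg hn]
    refine (Finset.sum_eq_zero fun p hp => ?_).symm
    rw [Finset.HasAntidiagonal.mem_antidiagonal] at hp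
    by_cases h1 : p.1.support ⊆ {j}
    · by_cases h2 : p.2.support ⊆ {j}
      · exfalso
        apply hn
        rw [← hp]
        exact (Finsupp.support_add).trans (Finset.union_subset h1 h2)
      · have : MvPowerSeries.coeff p.2 (substAt j g) = 0 := by
          rw [coeff_substAt, if_neg h2]
        rw [this, mul_zero]
    · have : MvPowerSeries.coeff p.1 (substAt j f) = 0 := by
        rw [coeff_substAt, if_neg h1]
      rw [this, zero_mul]

lemma expNeg_eq_evalNegHom : expNeg = PowerSeries.evalNegHom (PowerSeries.exp ℚ) := by
  ext n
  simp [expNeg, PowerSeries.evalNegHom, PowerSeries.coeff_rescale, PowerSeries.coeff_exp,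
    PowerSeries.coeff_mk]
  ring

lemma h_eq_phi_mul_expNeg (φ h : PowerSeries ℚ)
    (hφ : φ * (1 - expNeg) = PowerSeries.X)
    (hh : h * (PowerSeries.exp ℚ - 1) = PowerSeries.X) : h = φ * expNeg := by
  have hmulexp : PowerSeries.exp ℚ * expNeg = 1 := by
    rw [expNeg_eq_evalNegHom]; exact PowerSeries.exp_mul_exp_neg_eq_one
  have hne : (PowerSeries.exp ℚ - 1 : PowerSeries ℚ) ≠ 0 := by
    intro h0
    have := congrArg (PowerSeries.coeff 1) h0
    simp [PowerSeries.coeff_exp] at this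
  refine mul_right_cancel₀ hne ?_
  rw [hh]
  symm
  calc φ * expNeg * (PowerSeries.exp ℚ - 1)
      = φ * (expNeg * PowerSeries.exp ℚ) - φ * expNeg := by ring
    _ = φ * (1 - expNeg) := by rw [mul_comm expNeg, hmulexp]; ring
    _ = PowerSeries.X := hφ

lemma pair_sum {R : Type*} [CommRing R] {m : ℕ} (a b : Fin m → R) (j k : Fin m)
    (hjk : k ≠ j) :
    ∑ S ∈ (univ : Finset (Fin m)).powerset.filter (fun S => j ∈ S ∧ k ∈ S),
        (-1 : R) ^ S.card * ((∏ i ∈ S, a i) * ∏ i ∈ univ \ S, b i)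
    = (∏ l ∈ (univ.erase j).erase k, (b l - a l)) * a j * a k := by
  classical
  have hprod : ∏ l ∈ (univ.erase j).erase k, (b l - a l)
      = ∑ t ∈ ((univ.erase j).erase k).powerset,
          (∏ i ∈ t, (-a i)) * ∏ i ∈ ((univ.erase j).erase k) \ t, b i := by
    rw [← Finset.prod_add]
    exact Finset.prod_congr rfl fun l _ => by ring
  rw [hprod, Finset.sum_mul, Finset.sum_mul]
  refine Finset.sum_nbij' (i := fun S => (S.erase j).erase k)
    (j := fun t => insert j (insert k t)) ?_ ?_ ?_ ?_ ?_
  · intro S hS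
    simp only [Finset.mem_filter, Finset.mem_powerset] at hS
    rw [Finset.mem_powerset]
    exact Finset.erase_subset_erase _ (Finset.erase_subset_erase _ hS.1)
  · intro t ht
    rw [Finset.mem_powerset] at ht
    simp only [Finset.mem_filter, Finset.mem_powerset]
    refine ⟨Finset.subset_univ _, Finset.mem_insert_self _ _,
      Finset.mem_insert_of_mem (Finset.mem_insert_self _ _)⟩
  · intro S hS
    simp only [Finset.mem_filter, Finset.mem_powerset] at hS
    have hkS : k ∈ S.erase j := Finset.mem_erase.mpr ⟨hjk, hS.2.2⟩
    show insert j (insert k ((S.erase j).erase k)) = S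
    rw [Finset.insert_erase hkS, Finset.insert_erase hS.2.1]
  · intro t ht
    rw [Finset.mem_powerset] at ht
    have hjt : j ∉ insert k t := by
      intro hj
      rcases Finset.mem_insert.mp hj with h | h
      · exact hjk h.symm
      · exact (Finset.mem_erase.mp ((Finset.erase_subset _ _) (ht h))).1 rfl
    have hkt : k ∉ t := fun h => (Finset.mem_erase.mp (ht h)).1 rfl
    show ((insert j (insert k t)).erase j).erase k = t
    rw [Finset.erase_insert hjt, Finset.erase_insert hkt]
  · intro S hS
    simp only [Finset.mem_filter, Finset.mem_powerset] at hS
    have hkS : k ∈ S.erase j := Finset.mem_erase.mpr ⟨hjk, hS.2.2⟩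
    have hjT : j ∉ S.erase j := Finset.notMem_erase _ _
    have hkT : k ∉ (S.erase j).erase k := Finset.notMem_erase _ _
    -- card
    have hcard : S.card = ((S.erase j).erase k).card + 2 := by
      rw [Finset.card_erase_of_mem hkS, Finset.card_erase_of_mem hS.2.1]
      have h2 : 2 ≤ S.card := by
        refine Finset.one_lt_card.mpr ⟨j, hS.2.1, k, hS.2.2, fun e => hjk e.symm⟩
      omega
    -- products
    have hprodS : ∏ i ∈ S, a i = a j * (a k * ∏ i ∈ (S.erase j).erase k, a i) := by
      rw [← Finset.prod_erase_mul S a hS.2.1, ← Finset.prod_erase_mul _ a hkS]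
      ring
    have hsdiff : univ \ S = ((univ.erase j).erase k) \ ((S.erase j).erase k) := by
      ext x
      simp only [Finset.mem_sdiff, Finset.mem_erase, Finset.mem_univ, true_and]
      by_cases hxj : x = j
      · subst hxj; simp [hS.2.1]
      · by_cases hxk : x = k
        · subst hxk; simp [hS.2.2, hjk]
        · simp [hxj, hxk]
    have hneg : ∏ i ∈ (S.erase j).erase k, (-a i)
        = (-1 : R) ^ ((S.erase j).erase k).card * ∏ i ∈ (S.erase j).erase k, a i := by
      rw [← Finset.prod_const, ← Finset.prod_mul_distrib]
      exact Finset.prod_congr rfl fun i _ => by ring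
    rw [hprodS, hsdiff, hneg, hcard]
    ring

lemma key_comb {R : Type*} [CommRing R] {m : ℕ} (a b : Fin m → R) :
    ∑ r ∈ Finset.Icc 2 m, (-1 : R) ^ r * (r : R) * ((r : R) - 1) *
        ∑ S ∈ Finset.powersetCard r (univ : Finset (Fin m)),
          (∏ i ∈ S, a i) * ∏ i ∈ univ \ S, b i
    = ∑ j : Fin m, ∑ k ∈ univ.erase j,
        (∏ l ∈ (univ.erase j).erase k, (b l - a l)) * a j * a k := by
  classical
  set P : Finset (Fin m) → R := fun S => (∏ i ∈ S, a i) * ∏ i ∈ univ \ S, b i with hP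
  -- Step 1: rewrite LHS as a sum over the full powerset
  have step1 : ∑ r ∈ Finset.Icc 2 m, (-1 : R) ^ r * (r : R) * ((r : R) - 1) *
        ∑ S ∈ Finset.powersetCard r (univ : Finset (Fin m)), P S
      = ∑ S ∈ (univ : Finset (Fin m)).powerset,
          (-1 : R) ^ S.card * (S.card : R) * ((S.card : R) - 1) * P S := by
    rw [Finset.sum_powerset]
    rw [Finset.card_univ, Fintype.card_fin]
    have hsub : Finset.Icc 2 m ⊆ Finset.range (m + 1) := by
      intro r hr
      rw [Finset.mem_range]
      exact Nat.lt_succ_of_le (Finset.mem_Icc.mp hr).2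
    rw [← Finset.sum_subset hsub]
    · refine Finset.sum_congr rfl fun r _ => ?_
      rw [Finset.mul_sum]
      refine Finset.sum_congr rfl fun S hS => ?_
      rw [(Finset.mem_powersetCard.mp hS).2]
    · intro r hrr hr
      rw [Finset.mem_range] at hrr
      rw [Finset.mem_Icc] at hr
      push_neg at hr
      have hr01 : r = 0 ∨ r = 1 := by omega
      rcases hr01 with h | h <;> subst h <;>
        · refine Finset.sum_eq_zero fun S hS => ?_
          rw [(Finset.mem_powersetCard.mp hS).2]
          simp
  -- Step 2: expand the numeric coefficient as a double sum
  have step2 : ∀ S : Finset (Fin m),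
      (-1 : R) ^ S.card * (S.card : R) * ((S.card : R) - 1) * P S
      = ∑ j ∈ S, ∑ k ∈ S.erase j, (-1 : R) ^ S.card * P S := by
    intro S
    have e1 : ∀ j ∈ S, ∑ k ∈ S.erase j, (-1 : R) ^ S.card * P S
        = ((S.card - 1 : ℕ) : R) * ((-1 : R) ^ S.card * P S) := by
      intro j hj
      rw [Finset.sum_const, Finset.card_erase_of_mem hj, nsmul_eq_mul]
    rw [Finset.sum_congr rfl e1, Finset.sum_const, nsmul_eq_mul]
    rcases Finset.eq_empty_or_nonempty S with hS | hS
    · subst hS; simp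
    · have h1 : 1 ≤ S.card := Finset.card_pos.mpr hS
      rw [Nat.cast_sub h1]
      push_cast
      ring
  -- Step 3: swap summation order
  have step3 : ∑ S ∈ (univ : Finset (Fin m)).powerset,
        ∑ j ∈ S, ∑ k ∈ S.erase j, (-1 : R) ^ S.card * P S
      = ∑ j : Fin m, ∑ k ∈ univ.erase j,
          ∑ S ∈ (univ : Finset (Fin m)).powerset.filter (fun S => j ∈ S ∧ k ∈ S),
            (-1 : R) ^ S.card * P S := by
    have e1 : ∀ S : Finset (Fin m),
        ∑ j ∈ S, ∑ k ∈ S.erase j, (-1 : R) ^ S.card * P S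
        = ∑ j : Fin m, ∑ k ∈ univ.erase j,
            if j ∈ S ∧ k ∈ S then (-1 : R) ^ S.card * P S else 0 := by
      intro S
      have e2 : ∀ j : Fin m, (∑ k ∈ univ.erase j,
            if j ∈ S ∧ k ∈ S then (-1 : R) ^ S.card * P S else 0)
          = if j ∈ S then ∑ k ∈ S.erase j, (-1 : R) ^ S.card * P S else 0 := by
        intro j
        by_cases hj : j ∈ S
        · rw [if_pos hj]
          simp only [hj, true_and]
          rw [Finset.sum_ite_mem]
          apply Finset.sum_congr _ fun _ _ => rfl
          ext x
          simp only [Finset.mem_inter, Finset.mem_erase, Finset.mem_univ, true_and]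
          tauto
        · simp [hj]
      rw [Finset.sum_congr rfl fun j _ => e2 j, Finset.sum_ite_mem, Finset.univ_inter]
    rw [Finset.sum_congr rfl fun S _ => e1 S, Finset.sum_comm]
    refine Finset.sum_congr rfl fun j _ => ?_
    rw [Finset.sum_comm]
    refine Finset.sum_congr rfl fun k _ => ?_
    rw [Finset.sum_filter]
  rw [step1, Finset.sum_congr rfl fun S _ => step2 S, step3]
  refine Finset.sum_congr rfl fun j _ => Finset.sum_congr rfl fun k hk => ?_
  exact pair_sum a b j k (Finset.mem_erase.mp hk).1

/-- `Td · (Σ_{r=2}^m (−1)^r · r(r−1) · ch_r)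
      = Σ_{(j,k), j ≠ k} (∏_{l ∉ {j,k}} X_l) · h(X_j) · h(X_k)`,
where `h = X/(e^X − 1)` is the Bernoulli generating series and the sum on the right runs
over all ordered pairs of distinct indices. -/
theorem td_mul_second_weighted_sum_ch_eq (m : ℕ) (φ : PowerSeries ℚ)
    (hφ : φ * (1 - expNeg) = PowerSeries.X)
    (h : PowerSeries ℚ) (hh : h * (PowerSeries.exp ℚ - 1) = PowerSeries.X) :
    Td m φ * ∑ r ∈ Finset.Icc 2 m,
        (-1 : MvPowerSeries (Fin m) ℚ) ^ r * (r : MvPowerSeries (Fin m) ℚ) *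
          ((r : MvPowerSeries (Fin m) ℚ) - 1) * ch m r
      = ∑ j : Fin m, ∑ k ∈ Finset.univ.erase j,
          (∏ l ∈ (Finset.univ.erase j).erase k, MvPowerSeries.X l) *
            substAt j h * substAt k h := by
  classical
  have hhe : h = φ * expNeg := h_eq_phi_mul_expNeg φ h hφ hh
  have hmul : ∀ i : Fin m, substAt i h = substAt i φ * substAt i expNeg := by
    intro i; rw [hhe, substAt_mul]
  have hX : ∀ i : Fin m, substAt i φ - substAt i h = MvPowerSeries.X i := by
    intro i
    calc substAt i φ - substAt i h = substAt i (φ - φ * expNeg) := by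
          rw [substAt_sub, hhe]
      _ = substAt i (φ * (1 - expNeg)) := by congr 1; ring
      _ = MvPowerSeries.X i := by rw [hφ, substAt_X]
  have hch : ∀ r : ℕ, Td m φ * ch m r
      = ∑ S ∈ Finset.powersetCard r (univ : Finset (Fin m)),
          (∏ i ∈ S, substAt i h) * ∏ i ∈ univ \ S, substAt i φ := by
    intro r
    rw [ch, Finset.mul_sum]
    refine Finset.sum_congr rfl fun S hS => ?_
    have hSu : S ⊆ univ := (Finset.mem_powersetCard.mp hS).1
    rw [Td, ← Finset.prod_sdiff hSu]
    have e : (∏ i ∈ S, substAt i φ) * ∏ i ∈ S, substAt i expNeg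
        = ∏ i ∈ S, substAt i h := by
      rw [← Finset.prod_mul_distrib]
      exact Finset.prod_congr rfl fun i _ => (hmul i).symm
    calc ((∏ i ∈ univ \ S, substAt i φ) * ∏ i ∈ S, substAt i φ) * ∏ i ∈ S, substAt i expNeg
        = ((∏ i ∈ S, substAt i φ) * ∏ i ∈ S, substAt i expNeg)
            * ∏ i ∈ univ \ S, substAt i φ := by ring
      _ = (∏ i ∈ S, substAt i h) * ∏ i ∈ univ \ S, substAt i φ := by rw [e]
  calc Td m φ * ∑ r ∈ Finset.Icc 2 m,
        (-1 : MvPowerSeries (Fin m) ℚ) ^ r * (r : MvPowerSeries (Fin m) ℚ) *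
          ((r : MvPowerSeries (Fin m) ℚ) - 1) * ch m r
      = ∑ r ∈ Finset.Icc 2 m,
          (-1 : MvPowerSeries (Fin m) ℚ) ^ r * (r : MvPowerSeries (Fin m) ℚ) *
            ((r : MvPowerSeries (Fin m) ℚ) - 1) * (Td m φ * ch m r) := by
        rw [Finset.mul_sum]
        exact Finset.sum_congr rfl fun r _ => by ring
    _ = ∑ r ∈ Finset.Icc 2 m,
          (-1 : MvPowerSeries (Fin m) ℚ) ^ r * (r : MvPowerSeries (Fin m) ℚ) *
            ((r : MvPowerSeries (Fin m) ℚ) - 1) *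
          ∑ S ∈ Finset.powersetCard r (univ : Finset (Fin m)),
            (∏ i ∈ S, substAt i h) * ∏ i ∈ univ \ S, substAt i φ := by
        exact Finset.sum_congr rfl fun r _ => by rw [hch r]
    _ = ∑ j : Fin m, ∑ k ∈ Finset.univ.erase j,
          (∏ l ∈ (Finset.univ.erase j).erase k,
            (substAt l φ - substAt l h)) * substAt j h * substAt k h :=
        key_comb (fun i => substAt i h) (fun i => substAt i φ)
    _ = ∑ j : Fin m, ∑ k ∈ Finset.univ.erase j,
          (∏ l ∈ (Finset.univ.erase j).erase k, MvPowerSeries.X l) *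
            substAt j h * substAt k h := by
        refine Finset.sum_congr rfl fun j _ => Finset.sum_congr rfl fun k _ => ?_
        rw [Finset.prod_congr rfl fun l _ => hX l]
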